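/- Let G = {G^L | G^R} be a short dicotic game, let A be a left option of G, and let B be a right option of A with B ≼ G (mod D⁻) (so A is reversible through B). If the set B^L of left options of B is non-empty, then G = {(G^L \ {A}) ∪ B^L | G^R} (mod D⁻). -/

import Mathlib

namespace SetTheory

universe u

/-- The type of pre-games (as in Mathlib of December 2024, since removed from Mathlib). -/
inductive PGame : Type (u + 1)
  | mk : ∀ α β : Type u, (α → PGame) → (β → PGame) → PGame

namespace PGame

def LeftMoves : PGame → Type u
  | mk l _ _ _ => l

def RightMoves : PGame → Type u
  | mk _ r _ _ => r

def moveLeft : ∀ g : PGame, LeftMoves g → PGame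
  | mk _l _ L _ => L

def moveRight : ∀ g : PGame, RightMoves g → PGame
  | mk _ _r _ R => R

inductive IsOption : PGame → PGame → Prop
  | moveLeft {x : PGame} (i : x.LeftMoves) : IsOption (x.moveLeft i) x
  | moveRight {x : PGame} (i : x.RightMoves) : IsOption (x.moveRight i) x

set_option linter.deprecated false in
noncomputable def birthday : PGame.{u} → Ordinal.{u}
  | ⟨_, _, xL, xR⟩ =>
    max (Ordinal.lsub.{u, u} fun i => birthday (xL i)) (Ordinal.lsub.{u, u} fun i => birthday (xR i))

set_option linter.deprecated false in
theorem birthday_moveLeft_lt {x : PGame} (i : x.LeftMoves) :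
    (x.moveLeft i).birthday < x.birthday := by
  cases x; rw [birthday]; exact lt_max_of_lt_left (Ordinal.lt_lsub _ i)

set_option linter.deprecated false in
theorem birthday_moveRight_lt {x : PGame} (i : x.RightMoves) :
    (x.moveRight i).birthday < x.birthday := by
  cases x; rw [birthday]; exact lt_max_of_lt_right (Ordinal.lt_lsub _ i)

def Identical : PGame.{u} → PGame.{u} → Prop
  | mk _ _ xL xR, mk _ _ yL yR =>
    Relator.BiTotal (fun i j ↦ Identical (xL i) (yL j)) ∧
      Relator.BiTotal (fun i j ↦ Identical (xR i) (yR j))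

instance : Zero PGame :=
  ⟨⟨PEmpty, PEmpty, PEmpty.elim, PEmpty.elim⟩⟩

def star : PGame.{u} :=
  ⟨PUnit, PUnit, fun _ => 0, fun _ => 0⟩

def neg : PGame → PGame
  | ⟨l, r, L, R⟩ => ⟨r, l, fun i => neg (R i), fun i => neg (L i)⟩

instance : Neg PGame :=
  ⟨neg⟩

noncomputable instance : Add PGame.{u} :=
  ⟨fun x y => by
    induction x generalizing y with | mk xl xr _ _ IHxl IHxr => _
    induction y with | mk yl yr yL yR IHyl IHyr => _
    refine ⟨xl ⊕ yl, xr ⊕ yr, Sum.rec ?_ ?_, Sum.rec ?_ ?_⟩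
    · exact fun i => IHxl i (mk yl yr yL yR)
    · exact fun i => IHyl i
    · exact fun i => IHxr i (mk yl yr yL yR)
    · exact fun i => IHyr i⟩

end PGame

end SetTheory

open SetTheory PGame

namespace MisereDicot

def Follower (G' G : PGame) : Prop := Relation.ReflTransGen PGame.IsOption G' G

def IsShort (G : PGame) : Prop :=
  ∀ G', Follower G' G → Finite G'.LeftMoves ∧ Finite G'.RightMoves

def Dicot (G : PGame) : Prop :=
  ∀ G', Follower G' G → (IsEmpty G'.LeftMoves ↔ IsEmpty G'.RightMoves)

mutual
def LeftWinsFirst (G : PGame) : Prop :=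
  IsEmpty G.LeftMoves ∨ ∃ i, ¬ RightWinsFirst (G.moveLeft i)
termination_by G.birthday
decreasing_by exact PGame.birthday_moveLeft_lt i

def RightWinsFirst (G : PGame) : Prop :=
  IsEmpty G.RightMoves ∨ ∃ j, ¬ LeftWinsFirst (G.moveRight j)
termination_by G.birthday
decreasing_by exact PGame.birthday_moveRight_lt j
end

inductive MOutcome : Type
  | L | N | P | R
deriving DecidableEq

instance : LE MOutcome := ⟨fun a b => a = b ∨ a = .R ∨ b = .L⟩

noncomputable def outcome (G : PGame) : MOutcome := by
  classical
  exact if LeftWinsFirst G then (if RightWinsFirst G then .N else .L)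
        else (if RightWinsFirst G then .R else .P)

def Dge (G H : PGame) : Prop :=
  ∀ X : PGame, IsShort X → Dicot X → outcome (H + X) ≤ outcome (G + X)

def Deq (G H : PGame) : Prop :=
  ∀ X : PGame, IsShort X → Dicot X → outcome (G + X) = outcome (H + X)

def Dgt (G H : PGame) : Prop := Dge G H ∧ ¬ Deq G H

def DInvertible (G : PGame) : Prop :=
  ∃ H : PGame, IsShort H ∧ Dicot H ∧ Deq (G + H) 0

/-- The left option `G^L_i` is reversible through its right option `(G^L_i)^R_j ≼ G`. -/
def LeftReversibleAt (G : PGame) (i : G.LeftMoves) (j : (G.moveLeft i).RightMoves) : Prop :=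
  Dge G ((G.moveLeft i).moveRight j)

def RightReversibleAt (G : PGame) (j : G.RightMoves) (i : (G.moveRight j).LeftMoves) : Prop :=
  Dge ((G.moveRight j).moveLeft i) G

/-- `G` has a dominated left option (removable by the Domination theorem). -/
def LeftDominated (G : PGame) : Prop :=
  ∃ i i' : G.LeftMoves, ¬ (G.moveLeft i).Identical (G.moveLeft i') ∧
    Dge (G.moveLeft i') (G.moveLeft i)

def RightDominated (G : PGame) : Prop :=
  ∃ j j' : G.RightMoves, ¬ (G.moveRight j).Identical (G.moveRight j') ∧
    Dge (G.moveRight j) (G.moveRight j')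

/-- `G` has a non-atomic reversible left option (bypassable). -/
def LeftNonAtomicReversible (G : PGame) : Prop :=
  ∃ i j, LeftReversibleAt G i j ∧ Nonempty ((G.moveLeft i).moveRight j).LeftMoves

def RightNonAtomicReversible (G : PGame) : Prop :=
  ∃ j i, RightReversibleAt G j i ∧ Nonempty ((G.moveRight j).moveLeft i).RightMoves

/-- `G` has an atomic-reversible left option to which the atomic-reversibility
replacement applies nontrivially (i.e. changing the set of options): either some
other left option is a winning first move for Left (so the option is removable),
or the option is not already `*`. -/
def LeftAtomicReducible (G : PGame) : Prop :=
  ∃ i j, LeftReversibleAt G i j ∧ IsEmpty ((G.moveLeft i).moveRight j).LeftMoves ∧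
    ((∃ i', ¬ (G.moveLeft i').Identical (G.moveLeft i) ∧ ¬ RightWinsFirst (G.moveLeft i')) ∨
      ¬ (G.moveLeft i).Identical star)

def RightAtomicReducible (G : PGame) : Prop :=
  ∃ j i, RightReversibleAt G j i ∧ IsEmpty ((G.moveRight j).moveLeft i).RightMoves ∧
    ((∃ j', ¬ (G.moveRight j').Identical (G.moveRight j) ∧ ¬ LeftWinsFirst (G.moveRight j')) ∨
      ¬ (G.moveRight j).Identical star)

/-- The Substitution theorem applies to `G`: `G = {A | C}` with `A` an
atomic-reversible left option and `C` an atomic-reversible right option. -/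
def SubstitutionReducible (G : PGame) : Prop :=
  (∀ i i' : G.LeftMoves, (G.moveLeft i).Identical (G.moveLeft i')) ∧
  (∀ j j' : G.RightMoves, (G.moveRight j).Identical (G.moveRight j')) ∧
  (∃ i j, LeftReversibleAt G i j ∧ IsEmpty ((G.moveLeft i).moveRight j).LeftMoves) ∧
  (∃ j i, RightReversibleAt G j i ∧ IsEmpty ((G.moveRight j).moveLeft i).RightMoves)

/-- `G` is in canonical form: no follower admits any of the misère-dicot
simplifications (domination, non-atomic reversibility, atomic reversibility,
substitution) producing an equivalent game with a different set of options. -/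
def CanonicalForm (G : PGame) : Prop :=
  ∀ G', Follower G' G →
    ¬ (LeftDominated G' ∨ RightDominated G' ∨
       LeftNonAtomicReversible G' ∨ RightNonAtomicReversible G' ∨
       LeftAtomicReducible G' ∨ RightAtomicReducible G' ∨
       SubstitutionReducible G')

/-- The game `*2 = {0, * | 0, *}`. -/
def star2 : PGame :=
  PGame.mk Bool Bool (fun b => cond b star 0) (fun b => cond b star 0)

open Classical in
/-- The adjoint `G°` of `G`. -/
noncomputable def adjoint : PGame → PGame
  | PGame.mk l r L R =>
    if IsEmpty l ∧ IsEmpty r then star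
    else if IsEmpty l then PGame.mk r PUnit (fun j => adjoint (R j)) (fun _ => 0)
    else if IsEmpty r then PGame.mk PUnit l (fun _ => 0) (fun i => adjoint (L i))
    else PGame.mk r l (fun j => adjoint (R j)) (fun i => adjoint (L i))

/-- A universe of short games: a class closed under taking options, disjunctive
sums and conjugates. -/
structure GameUniverse where
  mem : PGame → Prop
  short_mem : ∀ G, mem G → IsShort G
  isOption_mem : ∀ G G', mem G → PGame.IsOption G' G → mem G'
  add_mem : ∀ G H, mem G → mem H → mem (G + H)
  neg_mem : ∀ G, mem G → mem (-G)

/-- `G ≽ H` modulo the universe `U`. -/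
def UGe (U : GameUniverse) (G H : PGame) : Prop :=
  ∀ X : PGame, U.mem X → outcome (H + X) ≤ outcome (G + X)

/-- `G = H` modulo the universe `U`. -/
def UEq (U : GameUniverse) (G H : PGame) : Prop :=
  ∀ X : PGame, U.mem X → outcome (G + X) = outcome (H + X)

/-- `G ≻ H` modulo the universe `U`. -/
def UGt (U : GameUniverse) (G H : PGame) : Prop := UGe U G H ∧ ¬ UEq U G H

/-- `J` is invertible in the universe `U`. -/
def UInvertible (U : GameUniverse) (J : PGame) : Prop :=
  ∃ J' : PGame, U.mem J' ∧ UEq U (J + J') 0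

end MisereDicot

namespace SetTheory.PGame

infix:50 " ≡ " => SetTheory.PGame.Identical

theorem leftMoves_mk {xl xr : Type u} {xL : xl → PGame.{u}} {xR : xr → PGame.{u}} :
    (PGame.mk xl xr xL xR).LeftMoves = xl := rfl

theorem rightMoves_mk {xl xr : Type u} {xL : xl → PGame.{u}} {xR : xr → PGame.{u}} :
    (PGame.mk xl xr xL xR).RightMoves = xr := rfl

@[elab_as_elim]
noncomputable def moveRecOn {C : PGame.{u} → Sort*} (x : PGame.{u})
    (IH : ∀ y : PGame.{u}, (∀ i, C (y.moveLeft i)) → (∀ j, C (y.moveRight j)) → C y) : C x :=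
  PGame.recOn x fun yl yr yL yR => IH (PGame.mk yl yr yL yR)

theorem identical_iff : ∀ {x y : PGame.{u}}, Identical x y ↔
    Relator.BiTotal (fun i j => Identical (x.moveLeft i) (y.moveLeft j)) ∧
      Relator.BiTotal (fun i j => Identical (x.moveRight i) (y.moveRight j))
  | mk _ _ _ _, mk _ _ _ _ => Iff.rfl

protected theorem Identical.symm : ∀ {x y : PGame.{u}}, Identical x y → Identical y x
  | mk _ _ _ _, mk _ _ _ _, ⟨⟨hL1, hL2⟩, ⟨hR1, hR2⟩⟩ =>
    ⟨⟨fun i => let ⟨j, h⟩ := hL2 i; ⟨j, Identical.symm h⟩,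
      fun j => let ⟨i, h⟩ := hL1 j; ⟨i, Identical.symm h⟩⟩,
     ⟨fun i => let ⟨j, h⟩ := hR2 i; ⟨j, Identical.symm h⟩,
      fun j => let ⟨i, h⟩ := hR1 j; ⟨i, Identical.symm h⟩⟩⟩

theorem Identical.moveLeft : ∀ {x y : PGame.{u}}, Identical x y → ∀ i, ∃ j, Identical (x.moveLeft i) (y.moveLeft j)
  | mk _ _ _ _, mk _ _ _ _, ⟨hl, _⟩, i => hl.1 i

theorem Identical.moveRight : ∀ {x y : PGame.{u}}, Identical x y → ∀ i, ∃ j, Identical (x.moveRight i) (y.moveRight j)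
  | mk _ _ _ _, mk _ _ _ _, ⟨_, hr⟩, i => hr.1 i

theorem leftMoves_add : ∀ x y : PGame.{u}, (x + y).LeftMoves = (x.LeftMoves ⊕ y.LeftMoves)
  | ⟨_, _, _, _⟩, ⟨_, _, _, _⟩ => rfl

theorem rightMoves_add : ∀ x y : PGame.{u}, (x + y).RightMoves = (x.RightMoves ⊕ y.RightMoves)
  | ⟨_, _, _, _⟩, ⟨_, _, _, _⟩ => rfl

def toLeftMovesAdd {x y : PGame.{u}} : x.LeftMoves ⊕ y.LeftMoves ≃ (x + y).LeftMoves :=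
  Equiv.cast (leftMoves_add x y).symm

def toRightMovesAdd {x y : PGame.{u}} : x.RightMoves ⊕ y.RightMoves ≃ (x + y).RightMoves :=
  Equiv.cast (rightMoves_add x y).symm

theorem add_moveLeft_inl {x : PGame.{u}} (y : PGame.{u}) (i) :
    (x + y).moveLeft (toLeftMovesAdd (Sum.inl i)) = x.moveLeft i + y := by
  cases x; cases y; rfl

theorem add_moveLeft_inr (x : PGame.{u}) {y : PGame.{u}} (i) :
    (x + y).moveLeft (toLeftMovesAdd (Sum.inr i)) = x + y.moveLeft i := by
  cases x; cases y; rfl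

theorem add_moveRight_inl {x : PGame.{u}} (y : PGame.{u}) (i) :
    (x + y).moveRight (toRightMovesAdd (Sum.inl i)) = x.moveRight i + y := by
  cases x; cases y; rfl

theorem add_moveRight_inr (x : PGame.{u}) {y : PGame.{u}} (i) :
    (x + y).moveRight (toRightMovesAdd (Sum.inr i)) = x + y.moveRight i := by
  cases x; cases y; rfl

theorem leftMoves_add_cases {x y : PGame.{u}} (k) {P : (x + y).LeftMoves → Prop}
    (hl : ∀ i, P <| toLeftMovesAdd (Sum.inl i)) (hr : ∀ i, P <| toLeftMovesAdd (Sum.inr i)) :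
    P k := by
  rw [← toLeftMovesAdd.apply_symm_apply k]
  rcases toLeftMovesAdd.symm k with i | i
  · exact hl i
  · exact hr i

theorem rightMoves_add_cases {x y : PGame.{u}} (k) {P : (x + y).RightMoves → Prop}
    (hl : ∀ j, P <| toRightMovesAdd (Sum.inl j)) (hr : ∀ j, P <| toRightMovesAdd (Sum.inr j)) :
    P k := by
  rw [← toRightMovesAdd.apply_symm_apply k]
  rcases toRightMovesAdd.symm k with i | i
  · exact hl i
  · exact hr i

end SetTheory.PGame

namespace MisereDicot

lemma lwf_def (G : PGame) : LeftWinsFirst G ↔ IsEmpty G.LeftMoves ∨ ∃ i, ¬ RightWinsFirst (G.moveLeft i) := by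
  rw [LeftWinsFirst]
lemma rwf_def (G : PGame) : RightWinsFirst G ↔ IsEmpty G.RightMoves ∨ ∃ j, ¬ LeftWinsFirst (G.moveRight j) := by
  rw [RightWinsFirst]

lemma isShort_of_isOption {x y : PGame} (h : IsShort y) (ho : PGame.IsOption x y) :
    IsShort x := fun z hz => h z (hz.tail ho)
lemma dicot_of_isOption {x y : PGame} (h : Dicot y) (ho : PGame.IsOption x y) :
    Dicot x := fun z hz => h z (hz.tail ho)

/-- Identical games have the same winners. -/
theorem wfc : ∀ (x y : PGame), x.Identical y →
    ((LeftWinsFirst x → LeftWinsFirst y) ∧ (RightWinsFirst x → RightWinsFirst y)) := by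
  intro x y h
  constructor
  · rw [lwf_def, lwf_def]
    rintro (he | ⟨i, hi⟩)
    · left
      by_contra hy
      obtain ⟨jy⟩ := not_isEmpty_iff.mp hy
      obtain ⟨ix, -⟩ := h.symm.moveLeft jy
      exact he.elim ix
    · obtain ⟨jy, hj⟩ := h.moveLeft i
      exact Or.inr ⟨jy, fun hr => hi ((wfc (y.moveLeft jy) (x.moveLeft i) hj.symm).2 hr)⟩
  · rw [rwf_def, rwf_def]
    rintro (he | ⟨i, hi⟩)
    · left
      by_contra hy
      obtain ⟨jy⟩ := not_isEmpty_iff.mp hy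
      obtain ⟨ix, -⟩ := h.symm.moveRight jy
      exact he.elim ix
    · obtain ⟨jy, hj⟩ := h.moveRight i
      exact Or.inr ⟨jy, fun hr => hi ((wfc (y.moveRight jy) (x.moveRight i) hj.symm).1 hr)⟩
termination_by x y => max x.birthday y.birthday
decreasing_by
  · exact max_lt ((PGame.birthday_moveLeft_lt _).trans_le (le_max_right _ _))
      ((PGame.birthday_moveLeft_lt _).trans_le (le_max_left _ _))
  · exact max_lt ((PGame.birthday_moveRight_lt _).trans_le (le_max_right _ _))
      ((PGame.birthday_moveRight_lt _).trans_le (le_max_left _ _))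

theorem lwf_congr {x y : PGame} (h : x.Identical y) : LeftWinsFirst x ↔ LeftWinsFirst y :=
  ⟨(wfc x y h).1, (wfc y x h.symm).1⟩
theorem rwf_congr {x y : PGame} (h : x.Identical y) : RightWinsFirst x ↔ RightWinsFirst y :=
  ⟨(wfc x y h).2, (wfc y x h.symm).2⟩

theorem identical_add_right : ∀ (x y z : PGame), x.Identical y → x + z ≡ y + z := by
  intro x y z h
  rw [identical_iff]
  constructor
  · constructor
    · intro i
      refine PGame.leftMoves_add_cases (P := fun i => ∃ b, (x + z).moveLeft i ≡ (y + z).moveLeft b) i ?_ ?_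
      · intro i'
        obtain ⟨jy, hj⟩ := h.moveLeft i'
        exact ⟨toLeftMovesAdd (Sum.inl jy), by
          rw [add_moveLeft_inl, add_moveLeft_inl]
          exact identical_add_right _ _ z hj⟩
      · intro k
        exact ⟨toLeftMovesAdd (Sum.inr k), by
          rw [add_moveLeft_inr, add_moveLeft_inr]
          exact identical_add_right x y (z.moveLeft k) h⟩
    · intro jj
      refine PGame.leftMoves_add_cases (P := fun jj => ∃ a, (x + z).moveLeft a ≡ (y + z).moveLeft jj) jj ?_ ?_
      · intro j'
        obtain ⟨ix, hi⟩ := h.symm.moveLeft j'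
        exact ⟨toLeftMovesAdd (Sum.inl ix), by
          rw [add_moveLeft_inl, add_moveLeft_inl]
          exact identical_add_right _ _ z hi.symm⟩
      · intro k
        exact ⟨toLeftMovesAdd (Sum.inr k), by
          rw [add_moveLeft_inr, add_moveLeft_inr]
          exact identical_add_right x y (z.moveLeft k) h⟩
  · constructor
    · intro i
      refine PGame.rightMoves_add_cases (P := fun i => ∃ b, (x + z).moveRight i ≡ (y + z).moveRight b) i ?_ ?_
      · intro i'
        obtain ⟨jy, hj⟩ := h.moveRight i'
        exact ⟨toRightMovesAdd (Sum.inl jy), by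
          rw [add_moveRight_inl, add_moveRight_inl]
          exact identical_add_right _ _ z hj⟩
      · intro k
        exact ⟨toRightMovesAdd (Sum.inr k), by
          rw [add_moveRight_inr, add_moveRight_inr]
          exact identical_add_right x y (z.moveRight k) h⟩
    · intro jj
      refine PGame.rightMoves_add_cases (P := fun jj => ∃ a, (x + z).moveRight a ≡ (y + z).moveRight jj) jj ?_ ?_
      · intro j'
        obtain ⟨ix, hi⟩ := h.symm.moveRight j'
        exact ⟨toRightMovesAdd (Sum.inl ix), by
          rw [add_moveRight_inl, add_moveRight_inl]
          exact identical_add_right _ _ z hi.symm⟩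
      · intro k
        exact ⟨toRightMovesAdd (Sum.inr k), by
          rw [add_moveRight_inr, add_moveRight_inr]
          exact identical_add_right x y (z.moveRight k) h⟩
termination_by x y z => (x.birthday, z.birthday)
decreasing_by
  all_goals first
    | exact Prod.Lex.left _ _ (PGame.birthday_moveLeft_lt _)
    | exact Prod.Lex.right _ (PGame.birthday_moveLeft_lt _)
    | exact Prod.Lex.left _ _ (PGame.birthday_moveRight_lt _)
    | exact Prod.Lex.right _ (PGame.birthday_moveRight_lt _)

lemma lwf_add_iff {x z : PGame} (h : ¬ IsEmpty (x + z).LeftMoves) :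
    LeftWinsFirst (x + z) ↔
      (∃ i, ¬ RightWinsFirst (x.moveLeft i + z)) ∨
        (∃ k, ¬ RightWinsFirst (x + z.moveLeft k)) := by
  rw [lwf_def]
  constructor
  · rintro (he | ⟨i, hi⟩)
    · exact absurd he h
    · rcases hsum : toLeftMovesAdd.symm i with i' | k
      · have hi2 : i = toLeftMovesAdd (Sum.inl i') := by
          rw [← hsum, Equiv.apply_symm_apply]
        rw [hi2, add_moveLeft_inl] at hi
        exact Or.inl ⟨i', hi⟩
      · have hi2 : i = toLeftMovesAdd (Sum.inr k) := by
          rw [← hsum, Equiv.apply_symm_apply]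
        rw [hi2, add_moveLeft_inr] at hi
        exact Or.inr ⟨k, hi⟩
  · rintro (⟨i, hi⟩ | ⟨k, hk⟩)
    · exact Or.inr ⟨toLeftMovesAdd (Sum.inl i), by rwa [add_moveLeft_inl]⟩
    · exact Or.inr ⟨toLeftMovesAdd (Sum.inr k), by rwa [add_moveLeft_inr]⟩

lemma rwf_add_iff {x z : PGame} (h : ¬ IsEmpty (x + z).RightMoves) :
    RightWinsFirst (x + z) ↔
      (∃ j, ¬ LeftWinsFirst (x.moveRight j + z)) ∨
        (∃ k, ¬ LeftWinsFirst (x + z.moveRight k)) := by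
  rw [rwf_def]
  constructor
  · rintro (he | ⟨i, hi⟩)
    · exact absurd he h
    · rcases hsum : toRightMovesAdd.symm i with i' | k
      · have hi2 : i = toRightMovesAdd (Sum.inl i') := by
          rw [← hsum, Equiv.apply_symm_apply]
        rw [hi2, add_moveRight_inl] at hi
        exact Or.inl ⟨i', hi⟩
      · have hi2 : i = toRightMovesAdd (Sum.inr k) := by
          rw [← hsum, Equiv.apply_symm_apply]
        rw [hi2, add_moveRight_inr] at hi
        exact Or.inr ⟨k, hi⟩
  · rintro (⟨i, hi⟩ | ⟨k, hk⟩)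
    · exact Or.inr ⟨toRightMovesAdd (Sum.inl i), by rwa [add_moveRight_inl]⟩
    · exact Or.inr ⟨toRightMovesAdd (Sum.inr k), by rwa [add_moveRight_inr]⟩

lemma not_isEmpty_left_add_left {x z : PGame} (h : Nonempty x.LeftMoves) :
    ¬ IsEmpty (x + z).LeftMoves := by
  obtain ⟨i⟩ := h
  exact not_isEmpty_iff.mpr ⟨toLeftMovesAdd (Sum.inl i)⟩
lemma not_isEmpty_right_add_left {x z : PGame} (h : Nonempty x.RightMoves) :
    ¬ IsEmpty (x + z).RightMoves := by
  obtain ⟨i⟩ := h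
  exact not_isEmpty_iff.mpr ⟨toRightMovesAdd (Sum.inl i)⟩


lemma mout_le (a b : MOutcome) : a ≤ b ↔ (a = b ∨ a = .R ∨ b = .L) := Iff.rfl

lemma outcome_le_iff {g h : PGame} :
    outcome h ≤ outcome g ↔
      ((LeftWinsFirst h → LeftWinsFirst g) ∧ (RightWinsFirst g → RightWinsFirst h)) := by
  classical
  unfold outcome
  by_cases h1 : LeftWinsFirst h <;> by_cases h2 : RightWinsFirst h <;>
    by_cases h3 : LeftWinsFirst g <;> by_cases h4 : RightWinsFirst g <;>
    simp [h1, h2, h3, h4, mout_le]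

lemma outcome_congr {g h : PGame} (h1 : LeftWinsFirst g ↔ LeftWinsFirst h)
    (h2 : RightWinsFirst g ↔ RightWinsFirst h) : outcome g = outcome h := by
  classical
  unfold outcome
  by_cases a : LeftWinsFirst h <;> by_cases b : RightWinsFirst h <;>
    simp [h1, h2, a, b]

lemma key (xl xr : Type) (xL : xl → PGame) (xR : xr → PGame)
    (hd : Dicot (PGame.mk xl xr xL xR))
    (iA : xl) (j : (xL iA).RightMoves)
    (hrev : Dge (PGame.mk xl xr xL xR) ((xL iA).moveRight j))
    (hBL : Nonempty ((xL iA).moveRight j).LeftMoves) :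
    ∀ X : PGame, IsShort X → Dicot X →
      ((LeftWinsFirst (PGame.mk xl xr xL xR + X) ↔
        LeftWinsFirst (PGame.mk ({i : xl // ¬ (xL i).Identical (xL iA)} ⊕
            ((xL iA).moveRight j).LeftMoves) xr
          (Sum.elim (fun i => xL i.1) (fun k => ((xL iA).moveRight j).moveLeft k)) xR + X)) ∧
       (RightWinsFirst (PGame.mk xl xr xL xR + X) ↔
        RightWinsFirst (PGame.mk ({i : xl // ¬ (xL i).Identical (xL iA)} ⊕
            ((xL iA).moveRight j).LeftMoves) xr
          (Sum.elim (fun i => xL i.1) (fun k => ((xL iA).moveRight j).moveLeft k)) xR + X))) := by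
  intro X
  induction X using PGame.moveRecOn with
  | _ X ihl ihr =>
  intro hsX hdX
  obtain ⟨k0⟩ := hBL
  have hxr : Nonempty xr := by
    have h0 := hd _ Relation.ReflTransGen.refl
    rw [PGame.leftMoves_mk, PGame.rightMoves_mk] at h0
    rw [← not_isEmpty_iff]
    exact fun he => (not_isEmpty_iff.mpr ⟨iA⟩) (h0.mpr he)
  have hGL : ¬ IsEmpty (PGame.mk xl xr xL xR + X).LeftMoves :=
    not_isEmpty_left_add_left ⟨iA⟩
  have hG'L : ¬ IsEmpty (PGame.mk ({i : xl // ¬ (xL i).Identical (xL iA)} ⊕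
      ((xL iA).moveRight j).LeftMoves) xr
      (Sum.elim (fun i => xL i.1) (fun k => ((xL iA).moveRight j).moveLeft k)) xR + X).LeftMoves :=
    not_isEmpty_left_add_left ⟨Sum.inr k0⟩
  have hGR : ¬ IsEmpty (PGame.mk xl xr xL xR + X).RightMoves :=
    not_isEmpty_right_add_left hxr
  have hG'R : ¬ IsEmpty (PGame.mk ({i : xl // ¬ (xL i).Identical (xL iA)} ⊕
      ((xL iA).moveRight j).LeftMoves) xr
      (Sum.elim (fun i => xL i.1) (fun k => ((xL iA).moveRight j).moveLeft k)) xR + X).RightMoves :=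
    not_isEmpty_right_add_left hxr
  have hsXl : ∀ k, IsShort (X.moveLeft k) :=
    fun k => isShort_of_isOption hsX (PGame.IsOption.moveLeft k)
  have hdXl : ∀ k, Dicot (X.moveLeft k) :=
    fun k => dicot_of_isOption hdX (PGame.IsOption.moveLeft k)
  have hsXr : ∀ k, IsShort (X.moveRight k) :=
    fun k => isShort_of_isOption hsX (PGame.IsOption.moveRight k)
  have hdXr : ∀ k, Dicot (X.moveRight k) :=
    fun k => dicot_of_isOption hdX (PGame.IsOption.moveRight k)
  constructor
  · constructor
    · intro hL
      rw [lwf_add_iff hGL] at hL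
      rw [lwf_add_iff hG'L]
      rcases hL with ⟨i, hi⟩ | ⟨k, hk⟩
      · by_cases hident : (xL i).Identical (xL iA)
        · have hAX : ¬ RightWinsFirst (xL iA + X) :=
            fun hr => hi ((rwf_congr (identical_add_right _ _ X hident)).mpr hr)
          rw [rwf_def] at hAX
          push_neg at hAX
          obtain ⟨-, hAX2⟩ := hAX
          have hBX : LeftWinsFirst ((xL iA).moveRight j + X) := by
            have := hAX2 (toRightMovesAdd (Sum.inl j))
            rwa [add_moveRight_inl] at this
          rw [lwf_add_iff (not_isEmpty_left_add_left ⟨k0⟩)] at hBX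
          rcases hBX with ⟨k, hk⟩ | ⟨x', hx'⟩
          · exact Or.inl ⟨Sum.inr k, hk⟩
          · have h1 : ¬ RightWinsFirst (PGame.mk xl xr xL xR + X.moveLeft x') := by
              intro hr
              exact hx' ((outcome_le_iff.mp (hrev _ (hsXl x') (hdXl x'))).2 hr)
            exact Or.inr ⟨x', fun hr => h1 (((ihl x' (hsXl x') (hdXl x')).2).mpr hr)⟩
        · exact Or.inl ⟨Sum.inl ⟨i, hident⟩, hi⟩
      · exact Or.inr ⟨k, fun hr => hk (((ihl k (hsXl k) (hdXl k)).2).mpr hr)⟩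
    · intro hL
      rw [lwf_add_iff hG'L] at hL
      rcases hL with ⟨i', hi'⟩ | ⟨k, hk⟩
      · rcases i' with ⟨i, hni⟩ | k
        · rw [lwf_add_iff hGL]
          exact Or.inl ⟨i, hi'⟩
        · have hBX : LeftWinsFirst ((xL iA).moveRight j + X) := by
            rw [lwf_add_iff (not_isEmpty_left_add_left ⟨k0⟩)]
            exact Or.inl ⟨k, hi'⟩
          exact (outcome_le_iff.mp (hrev X hsX hdX)).1 hBX
      · rw [lwf_add_iff hGL]
        exact Or.inr ⟨k, fun hr => hk (((ihl k (hsXl k) (hdXl k)).2).mp hr)⟩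
  · rw [rwf_add_iff hGR, rwf_add_iff hG'R]
    constructor
    · rintro (⟨r, hr⟩ | ⟨k, hk⟩)
      · exact Or.inl ⟨r, hr⟩
      · exact Or.inr ⟨k, fun hl => hk (((ihr k (hsXr k) (hdXr k)).1).mpr hl)⟩
    · rintro (⟨r, hr⟩ | ⟨k, hk⟩)
      · exact Or.inl ⟨r, hr⟩
      · exact Or.inr ⟨k, fun hl => hk (((ihr k (hsXr k) (hdXr k)).1).mp hl)⟩

/-- Non-atomic reversibility: if the left option `A = xL iA` of `G`
is reversible through its right option `B` with `B^L` non-empty, then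
`G = {(G^L \\ {A}) ∪ B^L | G^R}` (mod `D⁻`). -/
theorem stmt10 (xl xr : Type) (xL : xl → PGame) (xR : xr → PGame)
    (hs : IsShort (PGame.mk xl xr xL xR)) (hd : Dicot (PGame.mk xl xr xL xR))
    (iA : xl) (j : (xL iA).RightMoves)
    (hrev : Dge (PGame.mk xl xr xL xR) ((xL iA).moveRight j))
    (hBL : Nonempty ((xL iA).moveRight j).LeftMoves) :
    Deq (PGame.mk xl xr xL xR)
      (PGame.mk ({i : xl // ¬ (xL i).Identical (xL iA)} ⊕ ((xL iA).moveRight j).LeftMoves) xr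
        (Sum.elim (fun i => xL i.1) (fun k => ((xL iA).moveRight j).moveLeft k)) xR) := by
  intro X hsX hdX
  obtain ⟨h1, h2⟩ := key xl xr xL xR hd iA j hrev hBL X hsX hdX
  exact outcome_congr h1 h2

end MisereDicot
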